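/- Let κ be a regular uncountable cardinal that is not inaccessible, let λ < κ be minimal with 2^λ ≥ κ, and let f : κ → 2^λ be injective. For s ∈ 2^{<λ} set x_s = {i < κ : s is an initial segment of f(i)}. Then X = {x_s : s ∈ 2^{<λ} and x_s is stationary} is a stationary splitting family of cardinality at most 2^{<λ} < κ. -/

import Mathlib

open Set Cardinal

/-- `c` is a club in the well-ordered type `α` (thought of as the cardinal `κ = #α`):
it is closed (contains the supremum of each of its nonempty bounded subsets) and unbounded. -/
def IsClubIn {α : Type*} [LinearOrder α] (c : Set α) : Prop :=
  (∀ s ⊆ c, s.Nonempty → ∀ a : α, IsLUB s a → a ∈ c) ∧ ∀ a : α, ∃ b ∈ c, a < b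

/-- `x` is stationary: it meets every club. -/
def IsStatIn {α : Type*} [LinearOrder α] (x : Set α) : Prop :=
  ∀ c : Set α, IsClubIn c → (x ∩ c).Nonempty

/-- `y` stationarily splits `x`: both `x ∩ y` and `x \ y` are stationary. -/
def StatSplits {α : Type*} [LinearOrder α] (y x : Set α) : Prop :=
  IsStatIn (x ∩ y) ∧ IsStatIn (x \ y)

/-- For `s ∈ 2^{<λ}` coded by a pair `(b, g)` (i.e. `s = g ↾ (Iio b)`), the set
`x_s = {i < κ : s ⊴ f i}` of all `i` such that `s` is an initial segment of `f i`. -/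
def segSet {α β : Type*} [LinearOrder β] (f : α → β → Bool) (b : β) (g : β → Bool) :
    Set α :=
  {i : α | ∀ c < b, f i c = g c}

section Aux
variable {α : Type u} [LinearOrder α] [WellFoundedLT α]

theorem statMono {x y : Set α} (hxy : x ⊆ y) (hx : IsStatIn x) : IsStatIn y := by
  intro c hc
  obtain ⟨i, hi1, hi2⟩ := hx c hc
  exact ⟨i, hxy hi1, hi2⟩

theorem small_Iic (hinitα : ∀ a : α, #(Set.Iio a) < #α) (hinf : ℵ₀ ≤ #α) (a : α) :
    #(Set.Iic a) < #α := by
  rw [← Set.Iio_insert]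
  exact lt_of_le_of_lt Cardinal.mk_insert_le
    (Cardinal.add_lt_of_lt hinf (hinitα a) (lt_of_lt_of_le one_lt_aleph0 hinf))

theorem exists_gt_of_small (hinitα : ∀ a : α, #(Set.Iio a) < #α) (hinf : ℵ₀ ≤ #α)
    (a : α) : ∃ b : α, a < b := by
  by_contra h
  push_neg at h
  have huniv : (Set.Iic a) = (Set.univ : Set α) := eq_univ_of_forall h
  have := small_Iic hinitα hinf a
  rw [huniv, Cardinal.mk_univ] at this
  exact lt_irrefl _ this

theorem bounded_of_small (hreg : (#α).IsRegular) (hinitα : ∀ a : α, #(Set.Iio a) < #α)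
    {s : Set α} (hs : #s < #α) : ∃ b : α, ∀ a ∈ s, a < b := by
  have hinf : ℵ₀ ≤ #α := hreg.aleph0_le
  by_contra h
  push_neg at h
  have hcov : (Set.univ : Set α) ⊆ ⋃ a ∈ s, Set.Iic a := by
    intro c _
    obtain ⟨a, has, hle⟩ := h c
    exact Set.mem_biUnion has hle
  have h1 : #(⋃ a ∈ s, Set.Iic a) < #α := by
    refine lt_of_le_of_lt (Cardinal.mk_biUnion_le _ _) ?_
    refine Cardinal.mul_lt_of_lt hinf hs ?_
    rcases isEmpty_or_nonempty s with he | hne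
    · rw [ciSup_of_empty]
      exact lt_of_lt_of_le aleph0_pos hinf
    · exact Cardinal.iSup_lt_of_isRegular hreg hs fun a => small_Iic hinitα hinf a
  have := Cardinal.mk_le_mk_of_subset hcov
  rw [Cardinal.mk_univ] at this
  exact absurd (lt_of_le_of_lt this h1) (lt_irrefl _)

theorem club_iInter (hreg : (#α).IsRegular) (hunc : ℵ₀ < #α)
    (hinitα : ∀ a : α, #(Set.Iio a) < #α)
    {ι : Type u} [Nonempty ι] (hι : #ι < #α) {c : ι → Set α} (hc : ∀ j, IsClubIn (c j)) :
    IsClubIn (⋂ j, c j) := by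
  have hinf : ℵ₀ ≤ #α := hreg.aleph0_le
  constructor
  · intro s hs hne a ha
    exact Set.mem_iInter.2 fun j => (hc j).1 s (fun i hi => Set.mem_iInter.1 (hs hi) j) hne a ha
  · intro a
    have hH : ∀ (j : ι) (a : α), ∃ b, b ∈ c j ∧ a < b := fun j a => (hc j).2 a
    choose H hH1 hH2 using hH
    have hstep : ∀ a : α, ∃ b : α, a < b ∧ ∀ j, H j a < b := by
      intro a
      have hsmall : #(insert a (Set.range fun j => H j a) : Set α) < #α := by
        refine lt_of_le_of_lt Cardinal.mk_insert_le
          (Cardinal.add_lt_of_lt hinf ?_ (lt_of_lt_of_le one_lt_aleph0 hinf))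
        exact lt_of_le_of_lt Cardinal.mk_range_le hι
      obtain ⟨b, hb⟩ := bounded_of_small hreg hinitα hsmall
      exact ⟨b, hb a (Set.mem_insert _ _),
        fun j => hb _ (Set.mem_insert_of_mem _ ⟨j, rfl⟩)⟩
    choose step hstep1 hstep2 using hstep
    set seq : ℕ → α := fun n => step^[n] a with hseq
    have hseqsucc : ∀ n, seq (n + 1) = step (seq n) := by
      intro n; simp only [hseq, Function.iterate_succ_apply']
    have hseqlt : ∀ n, seq n < seq (n + 1) := by
      intro n; rw [hseqsucc]; exact hstep1 _
    have hU : {u : α | ∀ n, seq n ≤ u}.Nonempty := by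
      have hsm : #(Set.range seq) < #α :=
        lt_of_le_of_lt (Cardinal.mk_le_aleph0_iff.2 (Set.countable_range seq).to_subtype) hunc
      obtain ⟨b, hb⟩ := bounded_of_small hreg hinitα hsm
      exact ⟨b, fun n => (hb _ ⟨n, rfl⟩).le⟩
    set u₀ := (IsWellFounded.wf (r := ((· < ·) : α → α → Prop))).min _ hU with hu₀
    have hu₀mem : ∀ n, seq n ≤ u₀ := (IsWellFounded.wf).min_mem _ hU
    have hu₀min : ∀ u, (∀ n, seq n ≤ u) → u₀ ≤ u := by
      intro u hu
      exact not_lt.1 ((IsWellFounded.wf).not_lt_min {u : α | ∀ n, seq n ≤ u} (show u ∈ {u : α | ∀ n, seq n ≤ u} from hu))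
    have hmem : ∀ j, u₀ ∈ c j := by
      intro j
      refine (hc j).1 (Set.range fun n => H j (seq n)) ?_ ⟨_, ⟨0, rfl⟩⟩ u₀ ?_
      · rintro i ⟨n, rfl⟩; exact hH1 j (seq n)
      constructor
      · rintro i ⟨n, rfl⟩
        exact le_trans (le_of_lt (by rw [hseqsucc]; exact hstep2 (seq n) j)) (hu₀mem (n + 1))
      · rintro v hv
        refine hu₀min v fun n => ?_
        exact le_of_lt (lt_of_lt_of_le (hH2 j (seq n)) (hv ⟨n, rfl⟩))
    refine ⟨u₀, Set.mem_iInter.2 hmem, ?_⟩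
    calc a = seq 0 := rfl
    _ < seq 1 := hseqlt 0
    _ ≤ u₀ := hu₀mem 1

theorem stat_cover (hreg : (#α).IsRegular) (hunc : ℵ₀ < #α)
    (hinitα : ∀ a : α, #(Set.Iio a) < #α)
    {ι : Type u} [Nonempty ι] (hι : #ι < #α) {x : Set α} (hx : IsStatIn x)
    {y : ι → Set α} (hcov : x ⊆ ⋃ j, y j) : ∃ j, IsStatIn (x ∩ y j) := by
  by_contra h
  push_neg at h
  have h' : ∀ j, ∃ c : Set α, IsClubIn c ∧ (x ∩ y j) ∩ c = ∅ := by
    intro j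
    have := h j
    unfold IsStatIn at this
    push_neg at this
    obtain ⟨c, hc1, hc2⟩ := this
    exact ⟨c, hc1, hc2⟩
  choose cl hcl1 hcl2 using h'
  obtain ⟨i, hix, hicl⟩ := hx _ (club_iInter hreg hunc hinitα hι hcl1)
  obtain ⟨j, hj⟩ := Set.mem_iUnion.1 (hcov hix)
  have : i ∈ (x ∩ y j) ∩ cl j := ⟨⟨hix, hj⟩, Set.mem_iInter.1 hicl j⟩
  rw [hcl2 j] at this
  exact this

end Aux

section Seg
variable {α β : Type u} [LinearOrder α] [LinearOrder β]

theorem segCongr (f : α → β → Bool) {b : β} {g g' : β → Bool}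
    (h : ∀ c < b, g c = g' c) : segSet f b g = segSet f b g' := by
  ext i
  constructor <;> intro hi c hc
  · rw [← h c hc]; exact hi c hc
  · rw [h c hc]; exact hi c hc

theorem segMono (f : α → β → Bool) {b b' : β} (h : b' ≤ b) (g : β → Bool) :
    segSet f b g ⊆ segSet f b' g :=
  fun i hi c hc => hi c (lt_of_lt_of_le hc h)

theorem mk_fn_bool (σ : Type u) : #(σ → Bool) = 2 ^ #σ := by
  rw [Cardinal.mk_arrow, Cardinal.mk_bool]
  simp

/-- Extend a partial function `Iio b → Bool` to all of `β` by `false`. -/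
def segExt [DecidableEq β] (b : β) (s : ↥(Set.Iio b) → Bool) : β → Bool :=
  fun c => if h : c < b then s ⟨c, h⟩ else false

theorem segExt_eq [DecidableEq β] (b : β) (s : ↥(Set.Iio b) → Bool)
    {c : β} (h : c < b) : segExt b s c = s ⟨c, h⟩ := dif_pos h

end Seg

/-- Let `κ` be regular uncountable but not inaccessible, let `λ < κ` be minimal with
`2^λ ≥ κ` and let `f : κ → 2^λ` be injective. For `s ∈ 2^{<λ}` let
`x_s = {i < κ : s ⊴ f i}`. Then `X = {x_s : s ∈ 2^{<λ}, x_s stationary}` is a stationary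
splitting family of cardinality at most `2^{<λ} < κ`.
Here `κ` and `λ` are represented by well-ordered types `α` and `β` (in the same universe)
all of whose proper initial segments are small; the elements `s ∈ 2^{<λ}` are coded by pairs
`(b, g)` with `b : β`, `g : β → Bool` via `s = g ↾ (Iio b)`. -/
theorem splitting_family_of_not_inaccessible {α β : Type u} [LinearOrder α] [WellFoundedLT α]
    [LinearOrder β] [WellFoundedLT β]
    (hreg : (#α).IsRegular) (hunc : ℵ₀ < #α)
    (hinitα : ∀ a : α, #(Set.Iio a) < #α)
    (hinitβ : ∀ b : β, #(Set.Iio b) < #β)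
    (hlt : #β < #α) (hpow : #α ≤ 2 ^ #β)
    (hmin : ∀ μ : Cardinal, μ < #β → 2 ^ μ < #α)
    (f : α → β → Bool) (hf : Function.Injective f) :
    (∀ y ∈ {x : Set α | (∃ (b : β) (g : β → Bool), x = segSet f b g) ∧ IsStatIn x},
        IsStatIn y) ∧
    (∀ x : Set α, IsStatIn x →
      ∃ y ∈ {x : Set α | (∃ (b : β) (g : β → Bool), x = segSet f b g) ∧ IsStatIn x},
        StatSplits y x) ∧
    #{x : Set α | (∃ (b : β) (g : β → Bool), x = segSet f b g) ∧ IsStatIn x} ≤ 2 ^< #β ∧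
    2 ^< #β < #α := by
  classical
  have hinf : ℵ₀ ≤ #α := hunc.le
  -- β is infinite
  have hβinf : ℵ₀ ≤ #β := by
    by_contra h
    push_neg at h
    have h2 : (2 : Cardinal) ^ #β < ℵ₀ :=
      Cardinal.power_lt_aleph0 (by exact_mod_cast Cardinal.nat_lt_aleph0 2) h
    exact absurd (lt_of_le_of_lt hpow h2) (not_lt.2 hinf)
  have hβne : Nonempty β := Cardinal.mk_ne_zero_iff.1 (ne_of_gt (lt_of_lt_of_le aleph0_pos hβinf))
  -- β is unbounded
  have βub : ∀ c : β, ∃ b : β, c < b := exists_gt_of_small hinitβ hβinf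
  choose sb hsb using βub
  -- #β ≤ 2 ^< #β
  have hβle : #β ≤ 2 ^< #β := by
    by_contra h
    push_neg at h
    have h1 : (2 : Cardinal) ^ (2 ^< #β) ≤ 2 ^< #β := Cardinal.le_powerlt 2 h
    exact absurd (lt_of_lt_of_le (Cardinal.cantor _) h1) (lt_irrefl _)
  -- the function spaces at each level are small
  have hcard : ∀ b : β, #(↥(Set.Iio b) → Bool) < #α := by
    intro b
    rw [mk_fn_bool]
    exact hmin _ (hinitβ b)
  refine ⟨fun y hy => hy.2, ?_, ?_, ?_⟩
  · -- splitting
    intro x hx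
    suffices h : ∃ (b : β) (g : β → Bool),
        IsStatIn (x ∩ segSet f b g) ∧ IsStatIn (x \ segSet f b g) by
      obtain ⟨b, g, h1, h2⟩ := h
      exact ⟨segSet f b g, ⟨⟨b, g, rfl⟩, statMono Set.inter_subset_right h1⟩, h1, h2⟩
    by_contra hcon
    push_neg at hcon
    -- at each level some branch is stationary
    have hlev : ∀ b : β, ∃ g : β → Bool, IsStatIn (x ∩ segSet f b g) := by
      intro b
      have hcov : x ⊆ ⋃ s : (↥(Set.Iio b) → Bool), segSet f b (segExt b s) := by
        intro i hi
        refine Set.mem_iUnion.2 ⟨fun c => f i c.1, fun c hc => ?_⟩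
        rw [segExt_eq b _ hc]
      obtain ⟨s, hs⟩ := stat_cover hreg hunc hinitα (hcard b) hx hcov
      exact ⟨segExt b s, hs⟩
    choose g0 hg0 using hlev
    -- uniqueness of the stationary branch at each level
    have huniq : ∀ (b : β) (g g' : β → Bool), IsStatIn (x ∩ segSet f b g) →
        IsStatIn (x ∩ segSet f b g') → ∀ c < b, g c = g' c := by
      intro b g g' h1 h2 c hc
      by_contra hne
      have hsub : x ∩ segSet f b g' ⊆ x \ segSet f b g := by
        rintro i ⟨hix, hig⟩
        refine ⟨hix, fun hmem => hne ?_⟩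
        rw [← hmem c hc]
        exact hig c hc
      exact hcon b g h1 (statMono hsub h2)
    -- coherence of the chosen branches
    have key : ∀ (b b' c : β), c < b → c < b' → g0 b c = g0 b' c := by
      intro b b' c hb hb'
      have h1 : IsStatIn (x ∩ segSet f (min b b') (g0 b)) :=
        statMono (Set.inter_subset_inter_right x (segMono f (min_le_left b b') (g0 b))) (hg0 b)
      have h2 : IsStatIn (x ∩ segSet f (min b b') (g0 b')) :=
        statMono (Set.inter_subset_inter_right x (segMono f (min_le_right b b') (g0 b'))) (hg0 b')
      exact huniq (min b b') _ _ h1 h2 c (lt_min hb hb')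
    -- the limit branch
    set G : β → Bool := fun c => g0 (sb c) c with hG
    have hGstat : ∀ b : β, IsStatIn (x ∩ segSet f b G) := by
      intro b
      have heq : segSet f b (g0 b) = segSet f b G :=
        segCongr f fun c hc => key b (sb c) c hc (hsb c)
      rw [← heq]
      exact hg0 b
    -- cover x by the complements and the (at most one) point with f i = G
    set y : Option β → Set α :=
      fun o => o.elim {i : α | f i = G} (fun b => x \ segSet f b G) with hy
    have hcov : x ⊆ ⋃ o, y o := by
      intro i hi
      by_cases hfi : f i = G
      · exact Set.mem_iUnion.2 ⟨none, hfi⟩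
      · have hex : ∃ c, f i c ≠ G c := by
          by_contra h
          push_neg at h
          exact hfi (funext h)
        obtain ⟨c, hc⟩ := hex
        exact Set.mem_iUnion.2 ⟨some (sb c), hi, fun hmem => hc (hmem c (hsb c))⟩
    have hO : #(Option β) < #α := by
      rw [Cardinal.mk_option]
      exact Cardinal.add_lt_of_lt hinf hlt (lt_of_lt_of_le one_lt_aleph0 hinf)
    obtain ⟨o, ho⟩ := stat_cover hreg hunc hinitα hO hx hcov
    match o with
    | some b =>
      exact hcon b G (hGstat b) (statMono Set.inter_subset_right ho)
    | none =>
      by_cases hz : ∃ i₀, f i₀ = G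
      · obtain ⟨i₀, hi₀⟩ := hz
        have hclub : IsClubIn (Set.Ioi i₀) := by
          constructor
          · intro s hs hne a ha
            obtain ⟨e, he⟩ := hne
            exact lt_of_lt_of_le (hs he) (ha.1 he)
          · intro a
            obtain ⟨b, hb⟩ := exists_gt_of_small hinitα hinf (max a i₀)
            exact ⟨b, lt_of_le_of_lt (le_max_right _ _) hb, lt_of_le_of_lt (le_max_left _ _) hb⟩
        obtain ⟨i, ⟨hix, hiz⟩, hii⟩ := ho _ hclub
        have : i = i₀ := hf (by rw [hiz, hi₀])
        rw [this] at hii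
        exact lt_irrefl _ hii
      · have hclub : IsClubIn (Set.univ : Set α) :=
          ⟨fun _ _ _ a _ => trivial,
           fun a => (exists_gt_of_small hinitα hinf a).imp fun b hb => ⟨trivial, hb⟩⟩
        obtain ⟨i, ⟨_, hiz⟩, _⟩ := ho _ hclub
        exact hz ⟨i, hiz⟩
  · -- cardinality bound
    set F : (Σ b : β, (↥(Set.Iio b) → Bool)) → Set α :=
      fun p => segSet f p.1 (segExt p.1 p.2) with hF
    have hXsub : {x : Set α | (∃ (b : β) (g : β → Bool), x = segSet f b g) ∧ IsStatIn x}
        ⊆ Set.range F := by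
      rintro x ⟨⟨b, g, rfl⟩, -⟩
      exact ⟨⟨b, fun c => g c.1⟩, segCongr f fun c hc => segExt_eq b _ hc⟩
    calc #{x : Set α | (∃ (b : β) (g : β → Bool), x = segSet f b g) ∧ IsStatIn x}
        ≤ #(Set.range F) := Cardinal.mk_le_mk_of_subset hXsub
      _ ≤ #(Σ b : β, (↥(Set.Iio b) → Bool)) := Cardinal.mk_range_le
      _ = Cardinal.sum (fun b : β => #(↥(Set.Iio b) → Bool)) := Cardinal.mk_sigma _
      _ ≤ Cardinal.sum (fun _ : β => 2 ^< #β) := by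
          refine Cardinal.sum_le_sum _ _ fun b => ?_
          rw [mk_fn_bool]
          exact Cardinal.le_powerlt 2 (hinitβ b)
      _ = #β * (2 ^< #β) := Cardinal.sum_const' _ _
      _ ≤ (2 ^< #β) * (2 ^< #β) := mul_le_mul_left hβle _
      _ = 2 ^< #β := Cardinal.mul_eq_self (hβinf.trans hβle)
  · -- 2 ^< #β < #α
    have hS : (⨆ b : β, (2 : Cardinal) ^ #(Set.Iio b)) < #α :=
      Cardinal.iSup_lt_of_isRegular hreg hlt fun b => hmin _ (hinitβ b)
    refine lt_of_le_of_lt (Cardinal.powerlt_le.2 fun μ hμ => ?_) hS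
    have h1 : μ.ord < Ordinal.type ((· < ·) : β → β → Prop) :=
      lt_of_lt_of_le (Cardinal.ord_lt_ord.2 hμ) (Cardinal.ord_le_type _)
    obtain ⟨b, hb⟩ := Ordinal.typein_surj _ h1
    have h2 : μ = #(Set.Iio b) := by
      have h3 := Ordinal.card_typein (r := ((· < ·) : β → β → Prop)) b
      rw [hb, Cardinal.card_ord] at h3
      rw [h3]
      exact Cardinal.mk_congr (Equiv.subtypeEquivRight (p := fun y : β => y < b) (q := fun y => y ∈ Set.Iio b) fun _ => Set.mem_Iio.symm)
    rw [h2]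
    exact le_ciSup (Cardinal.bddAbove_range _) b
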